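/- Let (V,1) be a matrix order unit space and D = (Dₙ) a matrix metric on CS(V) that is convex, midpoint balanced and midpoint concave, with the D-topology agreeing with the BW-topology, and let Kₙ = {F ∈ A(CS(V), Mₙ) : L_{Dₙ}(F) < +∞}. If L^c_{Dₙ}(φ − ψ) = Dₙ(φ,ψ) for all φ, ψ ∈ CSₙ(V) and all n, then L_D = (L_{Dₙ}) is a lower semicontinuous matrix Lip-norm on the matrix order unit space (K₁, I). -/

import Mathlib

open scoped ENNReal ComplexOrder
open Matrix

noncomputable section

abbrev Mat (n : ℕ) (V : Type*) := Matrix (Fin n) (Fin n) V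
abbrev CMat (m n : ℕ) := Matrix (Fin m) (Fin n) ℂ

/-- The operator norm (ℓ² → ℓ²) of a complex rectangular matrix. -/
def opNorm {I J : Type*} [Fintype I] [Fintype J] [DecidableEq I] [DecidableEq J]
    (M : Matrix I J ℂ) : ℝ :=
  ‖LinearMap.toContinuousLinearMap (Matrix.toEuclideanLin M)‖

variable {V : Type*} [AddCommGroup V] [Module ℂ V] [StarAddMonoid V] [StarModule ℂ V]

/-- `γᴴ a γ` for a scalar matrix `γ` and a matrix `a` over `V`. -/
def conjEntry {m n : ℕ} (γ : CMat m n) (a : Mat m V) : Mat n V :=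
  Matrix.of fun i j => ∑ k, ∑ l, (star (γ k i) * γ l j) • a k l

/-- `α a β` for scalar matrices `α, β` and a matrix `a` over `V`. -/
def cMul {m n : ℕ} (α : CMat n m) (a : Mat m V) (β : CMat m n) : Mat n V :=
  Matrix.of fun i j => ∑ k, ∑ l, (α i k * β l j) • a k l

/-- The direct sum `a ⊕ b` of two square matrices. -/
def dSum {W : Type*} [AddCommGroup W] {m n : ℕ} (a : Matrix (Fin m) (Fin m) W)
    (b : Matrix (Fin n) (Fin n) W) : Matrix (Fin (m + n)) (Fin (m + n)) W :=
  (Matrix.fromBlocks a 0 0 b).submatrix finSumFinEquiv.symm finSumFinEquiv.symm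

/-- The canonical identification of `V` with `M₁(V)`. -/
def toM1 (v : V) : Mat 1 V := Matrix.of fun _ _ => v

/-- The diagonal matrix with diagonal entries `e`. -/
def unitM (e : V) (n : ℕ) : Mat n V := Matrix.of fun i j => if i = j then e else 0

/-- The scalar matrix `[c i j • e]`. -/
def scalMat (e : V) {n : ℕ} (c : CMat n n) : Mat n V := Matrix.of fun i j => c i j • e

/-- `a` is a scalar matrix, i.e. `a ∈ Mₙ(ℂ·e)`. -/
def isScalarMat (e : V) {n : ℕ} (a : Mat n V) : Prop := ∃ c : CMat n n, a = scalMat e c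

/-- The 2×2 block matrix `[[t·1, v], [vᴴ, t·1]]`. -/
def blockSA (e : V) {n : ℕ} (t : ℝ) (v : Mat n V) : Mat (n + n) V :=
  (Matrix.fromBlocks ((t : ℂ) • unitM e n) v vᴴ ((t : ℂ) • unitM e n)).submatrix
    finSumFinEquiv.symm finSumFinEquiv.symm

/-- A matrix order unit space `(V, 1)`: a matrix ordered *-vector space together with a
distinguished order unit such that `V⁺` is a proper cone with order unit `1` and each of the
cones `Mₙ(V)⁺` is Archimedean. -/
structure MOUS (V : Type*) [AddCommGroup V] [Module ℂ V] [StarAddMonoid V]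
    [StarModule ℂ V] where
  unit : V
  star_unit : star unit = unit
  pos : ∀ n, Set (Mat n V)
  zero_mem : ∀ n, (0 : Mat n V) ∈ pos n
  add_mem : ∀ n, ∀ a ∈ pos n, ∀ b ∈ pos n, a + b ∈ pos n
  smul_mem : ∀ n (t : ℝ), 0 ≤ t → ∀ a ∈ pos n, ((t : ℂ) • a) ∈ pos n
  isSelfAdjoint_mem : ∀ n, ∀ a ∈ pos n, aᴴ = a
  conj_mem : ∀ m n (γ : CMat m n), ∀ a ∈ pos m, conjEntry γ a ∈ pos n
  proper : ∀ n, ∀ a ∈ pos n, -a ∈ pos n → a = 0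
  orderUnit : ∀ v : V, star v = v → ∃ t : ℝ, 0 < t ∧ toM1 ((t : ℂ) • unit - v) ∈ pos 1
  arch : ∀ n (a : Mat n V), aᴴ = a →
    (∀ t : ℝ, 0 < t → ((t : ℂ) • unitM unit n + a) ∈ pos n) → a ∈ pos n

/-- The norm on `Mₙ(V)` determined by the matrix order:
`‖v‖ₙ = inf {t : [[t1, v], [v*, t1]] ≥ 0}`. -/
def MOUS.matNorm (S : MOUS V) (n : ℕ) (v : Mat n V) : ℝ :=
  sInf {t : ℝ | blockSA S.unit t v ∈ S.pos (n + n)}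

/-- The matrix pairing `⟪φ, a⟫ = [φ(a_{ij})]`, as a complex matrix indexed by
`Fin r × Fin n`. -/
def pairing {n r : ℕ} (φ : V →ₗ[ℂ] CMat n n) (a : Mat r V) :
    Matrix (Fin r × Fin n) (Fin r × Fin n) ℂ :=
  Matrix.of fun p q => φ (a p.1 q.1) p.2 q.2

/-- The matrix state space: `CSₙ(V)` is the set of unital completely positive maps
`V → Mₙ`. -/
def MOUS.CS (S : MOUS V) (n : ℕ) : Set (V →ₗ[ℂ] CMat n n) :=
  {φ | φ S.unit = 1 ∧ ∀ r, ∀ a ∈ S.pos r, (pairing φ a).PosSemidef}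

/-- A matrix Lipschitz seminorm on a matrix order unit space. -/
structure MatLip (S : MOUS V) where
  L : ∀ n, Mat n V → ℝ
  nonneg : ∀ n a, 0 ≤ L n a
  add_le : ∀ n (a b : Mat n V), L n (a + b) ≤ L n a + L n b
  smul_eq : ∀ n (c : ℂ) (a : Mat n V), L n (c • a) = ‖c‖ * L n a
  null : ∀ n (a : Mat n V), L n a = 0 ↔ isScalarMat S.unit a
  dSum_eq : ∀ m n (v : Mat m V) (w : Mat n V), L (m + n) (dSum v w) = max (L m v) (L n w)
  cMul_le : ∀ m n (α : CMat n m) (v : Mat m V) (β : CMat m n),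
    L n (cMul α v β) ≤ opNorm α * L m v * opNorm β
  star_eq : ∀ n (v : Mat n V), L n vᴴ = L n v

/-- The metric `D_{Lₙ}` on the matrix state space `CSₙ(V)` (with values in `[0,∞]`). -/
def Dl (S : MOUS V) (Lp : MatLip S) {n : ℕ} (φ ψ : V →ₗ[ℂ] CMat n n) : ℝ≥0∞ :=
  ⨆ (r : ℕ) (a : Mat r V) (_ : Lp.L r a ≤ 1),
    ENNReal.ofReal (opNorm (pairing φ a - pairing ψ a))

/-- The gauge `L_{D_{Lₙ}}` recovered from the matrix metric `D_L`. -/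
def LDl (S : MOUS V) (Lp : MatLip S) (n : ℕ) (a : Mat n V) : ℝ≥0∞ :=
  ⨆ (r : ℕ) (φ : V →ₗ[ℂ] CMat r r) (_ : φ ∈ S.CS r) (ψ : V →ₗ[ℂ] CMat r r)
    (_ : ψ ∈ S.CS r) (_ : φ ≠ ψ),
    ENNReal.ofReal (opNorm (pairing φ a - pairing ψ a)) / Dl S Lp φ ψ

/-- The direct sum `f ⊕ g` of elements of `Mₘ(V*)` and `Mₙ(V*)` (viewed as maps into matrix
algebras): `v ↦ f(v) ⊕ g(v)`. -/
def mapDSum {m n : ℕ} (f : V →ₗ[ℂ] CMat m m) (g : V →ₗ[ℂ] CMat n n) :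
    V →ₗ[ℂ] CMat (m + n) (m + n) where
  toFun v := dSum (f v) (g v)
  map_add' u v := by
    ext i j
    rcases h1 : finSumFinEquiv.symm i with i' | i' <;> rcases h2 : finSumFinEquiv.symm j with j' | j' <;>
      simp [dSum, Matrix.submatrix_apply, h1, h2, map_add, Matrix.add_apply]
  map_smul' c v := by
    ext i j
    rcases h1 : finSumFinEquiv.symm i with i' | i' <;> rcases h2 : finSumFinEquiv.symm j with j' | j' <;>
      simp [dSum, Matrix.submatrix_apply, h1, h2, _root_.map_smul, Matrix.smul_apply]

/-- The product `α f β` of an element `f` of `Mₘ(V*)` with scalar matrices: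
`v ↦ α f(v) β`. -/
def mapCMul {m n : ℕ} (α : CMat n m) (f : V →ₗ[ℂ] CMat m m) (β : CMat m n) :
    V →ₗ[ℂ] CMat n n where
  toFun v := α * f v * β
  map_add' u v := by simp [map_add, Matrix.mul_add, Matrix.add_mul]
  map_smul' c v := by simp [_root_.map_smul, Matrix.mul_smul, Matrix.smul_mul]

/-- A matrix metric on the matrix state space `CS(V)`. -/
structure MatMetric (S : MOUS V) where
  D : ∀ n, (V →ₗ[ℂ] CMat n n) → (V →ₗ[ℂ] CMat n n) → ℝ
  nonneg : ∀ n (φ ψ : V →ₗ[ℂ] CMat n n), φ ∈ S.CS n → ψ ∈ S.CS n → 0 ≤ D n φ ψ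
  eq_zero_iff : ∀ n (φ ψ : V →ₗ[ℂ] CMat n n), φ ∈ S.CS n → ψ ∈ S.CS n →
    (D n φ ψ = 0 ↔ φ = ψ)
  symm : ∀ n (φ ψ : V →ₗ[ℂ] CMat n n), φ ∈ S.CS n → ψ ∈ S.CS n → D n φ ψ = D n ψ φ
  triangle : ∀ n (φ ψ χ : V →ₗ[ℂ] CMat n n), φ ∈ S.CS n → ψ ∈ S.CS n → χ ∈ S.CS n →
    D n φ χ ≤ D n φ ψ + D n ψ χ
  dsum_eq : ∀ m n (φ φ' : V →ₗ[ℂ] CMat m m) (ψ ψ' : V →ₗ[ℂ] CMat n n),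
    φ ∈ S.CS m → φ' ∈ S.CS m → ψ ∈ S.CS n → ψ' ∈ S.CS n →
    D (m + n) (mapDSum φ ψ) (mapDSum φ' ψ') = max (D m φ φ') (D n ψ ψ')
  conj_le : ∀ m n (α : CMat m n), αᴴ * α = 1 → ∀ (φ ψ : V →ₗ[ℂ] CMat m m),
    φ ∈ S.CS m → ψ ∈ S.CS m → D n (mapCMul αᴴ φ α) (mapCMul αᴴ ψ α) ≤ D m φ ψ

/-- A matrix metric on `CS(V)` is convex. -/
def MMConvex (S : MOUS V) (Dm : MatMetric S) : Prop :=
  ∀ n (φ ψ χ : V →ₗ[ℂ] CMat n n), φ ∈ S.CS n → ψ ∈ S.CS n → χ ∈ S.CS n →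
    ∀ t : ℝ, 0 ≤ t → t ≤ 1 →
      Dm.D n φ ((t : ℂ) • ψ + ((1 - t : ℝ) : ℂ) • χ) ≤ t * Dm.D n φ ψ + (1 - t) * Dm.D n φ χ

/-- A matrix metric on `CS(V)` is midpoint balanced. -/
def MMBalanced (S : MOUS V) (Dm : MatMetric S) : Prop :=
  ∀ n (x y u v : V →ₗ[ℂ] CMat n n), x ∈ S.CS n → y ∈ S.CS n → u ∈ S.CS n → v ∈ S.CS n →
    ((2 : ℂ)⁻¹ • (x + v) = (2 : ℂ)⁻¹ • (y + u)) → Dm.D n x u = Dm.D n y v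

/-- A matrix metric on `CS(V)` is midpoint concave. -/
def MMConcave (S : MOUS V) (Dm : MatMetric S) : Prop :=
  ∀ n (x y u v : V →ₗ[ℂ] CMat n n), x ∈ S.CS n → y ∈ S.CS n → u ∈ S.CS n → v ∈ S.CS n →
    Dm.D n ((2 : ℂ)⁻¹ • (x + u)) ((2 : ℂ)⁻¹ • (y + v)) ≤ (Dm.D n x y + Dm.D n u v) / 2

/-- The BW-topology on `CSₙ(V)`: the topology of pointwise (weak*) convergence. -/
def bwTop (S : MOUS V) (n : ℕ) : TopologicalSpace ↥(S.CS n) :=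
  TopologicalSpace.induced (fun φ : ↥(S.CS n) => ⇑(φ : V →ₗ[ℂ] CMat n n)) Pi.topologicalSpace

/-- The topology on a subset `K` induced by a (real-valued) metric `d`. -/
def dTop {X : Type*} (K : Set X) (d : X → X → ℝ) : TopologicalSpace ↥K :=
  TopologicalSpace.generateFrom
    {U : Set ↥K | ∃ x : ↥K, ∃ ε : ℝ, 0 < ε ∧ U = {y : ↥K | d (x : X) (y : X) < ε}}

/-- The topology on a subset `K` induced by an `ℝ≥0∞`-valued metric `d`. -/
def dTopE {X : Type*} (K : Set X) (d : X → X → ℝ≥0∞) : TopologicalSpace ↥K :=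
  TopologicalSpace.generateFrom
    {U : Set ↥K | ∃ x : ↥K, ∃ ε : ℝ≥0∞, 0 < ε ∧ U = {y : ↥K | d (x : X) (y : X) < ε}}

/-- The compression `γ* φ γ` of a map `φ : V → Mₘ` by a scalar matrix `γ ∈ M_{m,n}`. -/
def stateConj {m n : ℕ} (γ : CMat m n) (φ : V →ₗ[ℂ] CMat m m) : V →ₗ[ℂ] CMat n n :=
  mapCMul γᴴ φ γ

/-- The compression `(γ ⊗ 1_k)* M (γ ⊗ 1_k)` of a matrix `M ∈ Mₘ(M_k)`. -/
def ampConj {k m N : ℕ} (γ : CMat m N) (M : Matrix (Fin m × Fin k) (Fin m × Fin k) ℂ) :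
    Matrix (Fin N × Fin k) (Fin N × Fin k) ℂ :=
  Matrix.of fun p q => ∑ i, ∑ j, star (γ i p.1) * M (i, p.2) (j, q.2) * γ j q.1

/-- An element of `A(CS(V), M_k)`: a matrix affine mapping `F = (Fₙ) : CS(V) → M_k` such that
`F₁` is BW-continuous. -/
structure MatAffine (S : MOUS V) (k : ℕ) where
  F : ∀ n, (V →ₗ[ℂ] CMat n n) → Matrix (Fin n × Fin k) (Fin n × Fin k) ℂ
  affine : ∀ (N p : ℕ) (ni : Fin p → ℕ) (φ : ∀ i, V →ₗ[ℂ] CMat (ni i) (ni i))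
      (γ : ∀ i, CMat (ni i) N), (∀ i, φ i ∈ S.CS (ni i)) →
      (∑ i, (γ i)ᴴ * γ i) = 1 →
      F N (∑ i, stateConj (γ i) (φ i)) = ∑ i, ampConj (γ i) (F (ni i) (φ i))
  cont : @Continuous ↥(S.CS 1) (Matrix (Fin 1 × Fin k) (Fin 1 × Fin k) ℂ) (bwTop S 1) _
      (fun φ => F 1 (φ : V →ₗ[ℂ] CMat 1 1))

/-- The Lipschitz gauge `L_{D_k}` on `A(CS(V), M_k)` induced by a matrix metric `D`. -/
def LD (S : MOUS V) (Dm : MatMetric S) {k : ℕ} (F : MatAffine S k) : ℝ≥0∞ :=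
  ⨆ (r : ℕ) (φ : V →ₗ[ℂ] CMat r r) (_ : φ ∈ S.CS r) (ψ : V →ₗ[ℂ] CMat r r)
    (_ : ψ ∈ S.CS r) (_ : φ ≠ ψ),
    ENNReal.ofReal (opNorm (F.F r φ - F.F r ψ)) / ENNReal.ofReal (Dm.D r φ ψ)

/-- `Kₙ = {F ∈ A(CS(V), Mₙ) : L_{Dₙ}(F) < ∞}`. -/
def Kset (S : MOUS V) (Dm : MatMetric S) (k : ℕ) : Set (MatAffine S k) :=
  {F | LD S Dm F ≠ ⊤}

/-- Block-diagonal direct sum in the target: `M ⊕ N ∈ M_r(M_{m+k})` of `M ∈ M_r(Mₘ)` and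
`N ∈ M_r(M_k)`. -/
def dsumAmp {r m k : ℕ} (M : Matrix (Fin r × Fin m) (Fin r × Fin m) ℂ)
    (N : Matrix (Fin r × Fin k) (Fin r × Fin k) ℂ) :
    Matrix (Fin r × Fin (m + k)) (Fin r × Fin (m + k)) ℂ :=
  Matrix.of fun p q =>
    Sum.elim
      (fun a => Sum.elim (fun b => M (p.1, a) (q.1, b)) (fun _ => 0) (finSumFinEquiv.symm q.2))
      (fun a => Sum.elim (fun _ => (0 : ℂ)) (fun b => N (p.1, a) (q.1, b)) (finSumFinEquiv.symm q.2))
      (finSumFinEquiv.symm p.2)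

/-- The product `(α ⊗ 1_r) M (β ⊗ 1_r)` for `M ∈ M_r(Mₘ)`, `α ∈ M_{k,m}`, `β ∈ M_{m,k}`. -/
def ampMul {r m k : ℕ} (α : CMat k m) (M : Matrix (Fin r × Fin m) (Fin r × Fin m) ℂ)
    (β : CMat m k) : Matrix (Fin r × Fin k) (Fin r × Fin k) ℂ :=
  Matrix.of fun p q => ∑ i, ∑ j, α p.2 i * M (p.1, i) (q.1, j) * β j q.2

/-- A scalar element `1_r ⊗ c ∈ Mₙ(ℂ·I)` evaluated at level `r`. -/
def scalarAmp {k : ℕ} (r : ℕ) (c : CMat k k) :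
    Matrix (Fin r × Fin k) (Fin r × Fin k) ℂ :=
  Matrix.of fun p q => if p.1 = q.1 then c p.2 q.2 else 0

/-- `L^c_{Dₙ}(φ - ψ)`, i.e. the metric `D_{L_{Dₙ}}` on `CSₙ(K₁) ≅ CSₙ(V)` induced by the
Lipschitz gauge `L_D` on `A(CS(V))`. -/
def DD (S : MOUS V) (Dm : MatMetric S) (n : ℕ) (φ ψ : V →ₗ[ℂ] CMat n n) : ℝ≥0∞ :=
  ⨆ (r : ℕ) (F : MatAffine S r) (_ : LD S Dm F ≤ 1),
    ENNReal.ofReal (opNorm (F.F n φ - F.F n ψ))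

/-- `L_D = (L_{Dₙ})` is a lower semicontinuous matrix Lip-norm on the matrix order unit space
`(K₁, I)` (whose matrix levels are `Kₙ ⊆ A(CS(V), Mₙ)`, with `Mₙ(K₁)` identified with `Kₙ`):
it is a matrix Lipschitz seminorm (finite on `K`, null space `Mₙ(ℂI)`, compatible with direct
sums, products by scalar matrices and the involution), it is lower semicontinuous for the
norm of `A(CS(V))`, and the metric topology it induces on the matrix state space
`CS(K₁) ≅ CS(V)` agrees with the BW-topology. -/
def IsLipNormOnK (S : MOUS V) (Dm : MatMetric S) : Prop :=
  -- subadditivity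
  (∀ k (F G H : MatAffine S k),
    (∀ r (φ : V →ₗ[ℂ] CMat r r), φ ∈ S.CS r → H.F r φ = F.F r φ + G.F r φ) →
    LD S Dm H ≤ LD S Dm F + LD S Dm G) ∧
  -- homogeneity
  (∀ k (c : ℂ) (F H : MatAffine S k),
    (∀ r (φ : V →ₗ[ℂ] CMat r r), φ ∈ S.CS r → H.F r φ = c • F.F r φ) →
    LD S Dm H = (‖c‖₊ : ℝ≥0∞) * LD S Dm F) ∧
  -- the null space is Mₙ(ℂ·I)
  (∀ k (F : MatAffine S k), LD S Dm F = 0 ↔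
    ∃ c : CMat k k, ∀ r (φ : V →ₗ[ℂ] CMat r r), φ ∈ S.CS r → F.F r φ = scalarAmp r c) ∧
  -- direct sums
  (∀ m k (F : MatAffine S m) (G : MatAffine S k) (H : MatAffine S (m + k)),
    (∀ r (φ : V →ₗ[ℂ] CMat r r), φ ∈ S.CS r →
      H.F r φ = dsumAmp (F.F r φ) (G.F r φ)) →
    LD S Dm H = max (LD S Dm F) (LD S Dm G)) ∧
  -- products with scalar matrices
  (∀ m k (α : CMat k m) (β : CMat m k) (F : MatAffine S m) (H : MatAffine S k),
    (∀ r (φ : V →ₗ[ℂ] CMat r r), φ ∈ S.CS r → H.F r φ = ampMul α (F.F r φ) β) →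
    LD S Dm H ≤ ENNReal.ofReal (opNorm α) * LD S Dm F * ENNReal.ofReal (opNorm β)) ∧
  -- the involution
  (∀ k (F H : MatAffine S k),
    (∀ r (φ : V →ₗ[ℂ] CMat r r), φ ∈ S.CS r → H.F r φ = (F.F r φ)ᴴ) →
    LD S Dm H = LD S Dm F) ∧
  -- lower semicontinuity (level sets are closed for the norm of A(CS(V)))
  (∀ k (t : ℝ), 0 < t → ∀ F : MatAffine S k,
    (∀ ε : ℝ, 0 < ε → ∃ G : MatAffine S k, LD S Dm G ≤ ENNReal.ofReal t ∧
      ∀ r (φ : V →ₗ[ℂ] CMat r r), φ ∈ S.CS r → opNorm (F.F r φ - G.F r φ) ≤ ε) →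
    LD S Dm F ≤ ENNReal.ofReal t) ∧
  -- the D_{L_D}-topology on the matrix state space agrees with the BW-topology
  (∀ n, dTopE (S.CS n) (DD S Dm n) = bwTop S n)


/-! ### Auxiliary lemmas -/

section OpNormAux
open scoped Matrix.Norms.L2Operator

set_option linter.unusedSectionVars false

variable {I J K : Type*} [Fintype I] [Fintype J] [Fintype K]
  [DecidableEq I] [DecidableEq J] [DecidableEq K]

lemma opNorm_eq (M : Matrix I J ℂ) : opNorm M = ‖M‖ := rfl

lemma opNorm_nonneg' (M : Matrix I J ℂ) : 0 ≤ opNorm M := by rw [opNorm_eq]; exact norm_nonneg M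

lemma opNorm_eq_zero' {M : Matrix I J ℂ} (h : opNorm M = 0) : M = 0 := by
  rw [opNorm_eq] at h; exact norm_eq_zero.mp h

lemma opNorm_zero' : opNorm (0 : Matrix I J ℂ) = 0 := by
  rw [opNorm_eq]; exact norm_zero

lemma opNorm_neg' (M : Matrix I J ℂ) : opNorm (-M) = opNorm M := by
  rw [opNorm_eq, opNorm_eq]; exact norm_neg M

lemma opNorm_add_le' (M N : Matrix I J ℂ) : opNorm (M + N) ≤ opNorm M + opNorm N :=
  norm_add_le (E := Matrix I J ℂ) M N

lemma opNorm_smul' (c : ℂ) (M : Matrix I J ℂ) : opNorm (c • M) = ‖c‖ * opNorm M :=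
  norm_smul c M

lemma opNorm_conjT (M : Matrix I J ℂ) : opNorm Mᴴ = opNorm M :=
  Matrix.l2_opNorm_conjTranspose M

lemma opNorm_mul_le' (M : Matrix I J ℂ) (N : Matrix J K ℂ) :
    opNorm (M * N) ≤ opNorm M * opNorm N := Matrix.l2_opNorm_mul M N

lemma eucSq (y : EuclideanSpace ℂ I) : ‖y‖ ^ 2 = ∑ i, ‖y i‖ ^ 2 := by
  rw [EuclideanSpace.norm_eq, Real.sq_sqrt (by positivity)]

lemma teApply (M : Matrix I J ℂ) (x : EuclideanSpace ℂ J) (i : I) :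
    (Matrix.toEuclideanLin M x) i = ∑ j, M i j * x j := by
  simp [Matrix.toEuclideanLin_apply, Matrix.mulVec, dotProduct]

lemma le_opNorm' (M : Matrix I J ℂ) (x : EuclideanSpace ℂ J) :
    ‖(Matrix.toEuclideanLin M x : EuclideanSpace ℂ I)‖ ≤ opNorm M * ‖x‖ :=
  ContinuousLinearMap.le_opNorm (LinearMap.toContinuousLinearMap (Matrix.toEuclideanLin M)) x

lemma opNorm_le_bound' (M : Matrix I J ℂ) {C : ℝ} (hC : 0 ≤ C)
    (h : ∀ x : EuclideanSpace ℂ J,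
      ‖(Matrix.toEuclideanLin M x : EuclideanSpace ℂ I)‖ ^ 2 ≤ (C * ‖x‖) ^ 2) :
    opNorm M ≤ C := by
  refine ContinuousLinearMap.opNorm_le_bound _ hC fun x => ?_
  have he : (LinearMap.toContinuousLinearMap (Matrix.toEuclideanLin M)) x
      = (Matrix.toEuclideanLin M x : EuclideanSpace ℂ I) := rfl
  rw [he]
  have h2 := h x
  have h0 : (0:ℝ) ≤ C * ‖x‖ := by positivity
  nlinarith [norm_nonneg ((Matrix.toEuclideanLin M x : EuclideanSpace ℂ I))]

end OpNormAux

section DsumAux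
open scoped Matrix.Norms.L2Operator

set_option linter.unusedSectionVars false

variable {r m k : ℕ}

lemma sum_finSum {β : Type*} [AddCommMonoid β] (f : Fin (m + k) → β) :
    ∑ p, f p = (∑ a, f (finSumFinEquiv (Sum.inl a))) + ∑ b, f (finSumFinEquiv (Sum.inr b)) := by
  rw [← Equiv.sum_comp finSumFinEquiv f, Fintype.sum_sum_type]

def sliceL (x : EuclideanSpace ℂ (Fin r × Fin (m + k))) : EuclideanSpace ℂ (Fin r × Fin m) :=
  (WithLp.equiv 2 _).symm fun q => x (q.1, finSumFinEquiv (Sum.inl q.2))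

def sliceR (x : EuclideanSpace ℂ (Fin r × Fin (m + k))) : EuclideanSpace ℂ (Fin r × Fin k) :=
  (WithLp.equiv 2 _).symm fun q => x (q.1, finSumFinEquiv (Sum.inr q.2))

lemma normsq_slice (x : EuclideanSpace ℂ (Fin r × Fin (m + k))) :
    ‖x‖ ^ 2 = ‖sliceL x‖ ^ 2 + ‖sliceR x‖ ^ 2 := by
  rw [eucSq, eucSq, eucSq, Fintype.sum_prod_type, Fintype.sum_prod_type, Fintype.sum_prod_type,
    ← Finset.sum_add_distrib]
  refine Finset.sum_congr rfl fun p1 _ => ?_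
  rw [sum_finSum (fun p2 => ‖x (p1, p2)‖ ^ 2)]
  rfl

variable (A : Matrix (Fin r × Fin m) (Fin r × Fin m) ℂ) (B : Matrix (Fin r × Fin k) (Fin r × Fin k) ℂ)

lemma dsumAmp_ll (p1 q1 : Fin r) (a b : Fin m) :
    dsumAmp A B (p1, finSumFinEquiv (Sum.inl a)) (q1, finSumFinEquiv (Sum.inl b)) = A (p1, a) (q1, b) := by
  simp [dsumAmp]

lemma dsumAmp_lr (p1 q1 : Fin r) (a : Fin m) (b : Fin k) :
    dsumAmp A B (p1, finSumFinEquiv (Sum.inl a)) (q1, finSumFinEquiv (Sum.inr b)) = 0 := by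
  simp [dsumAmp]

lemma dsumAmp_rl (p1 q1 : Fin r) (a : Fin k) (b : Fin m) :
    dsumAmp A B (p1, finSumFinEquiv (Sum.inr a)) (q1, finSumFinEquiv (Sum.inl b)) = 0 := by
  simp [dsumAmp]

lemma dsumAmp_rr (p1 q1 : Fin r) (a b : Fin k) :
    dsumAmp A B (p1, finSumFinEquiv (Sum.inr a)) (q1, finSumFinEquiv (Sum.inr b)) = B (p1, a) (q1, b) := by
  simp [dsumAmp]

lemma dsum_apply_inl (x : EuclideanSpace ℂ (Fin r × Fin (m + k))) (p1 : Fin r) (a : Fin m) :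
    (Matrix.toEuclideanLin (dsumAmp A B) x) (p1, finSumFinEquiv (Sum.inl a))
      = (Matrix.toEuclideanLin A (sliceL x)) (p1, a) := by
  rw [teApply, teApply, Fintype.sum_prod_type, Fintype.sum_prod_type]
  refine Finset.sum_congr rfl fun q1 _ => ?_
  rw [sum_finSum (fun q2 => dsumAmp A B (p1, finSumFinEquiv (Sum.inl a)) (q1, q2) * x (q1, q2))]
  simp only [dsumAmp_ll, dsumAmp_lr, zero_mul, Finset.sum_const_zero, add_zero]
  rfl

lemma dsum_apply_inr (x : EuclideanSpace ℂ (Fin r × Fin (m + k))) (p1 : Fin r) (a : Fin k) :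
    (Matrix.toEuclideanLin (dsumAmp A B) x) (p1, finSumFinEquiv (Sum.inr a))
      = (Matrix.toEuclideanLin B (sliceR x)) (p1, a) := by
  rw [teApply, teApply, Fintype.sum_prod_type, Fintype.sum_prod_type]
  refine Finset.sum_congr rfl fun q1 _ => ?_
  rw [sum_finSum (fun q2 => dsumAmp A B (p1, finSumFinEquiv (Sum.inr a)) (q1, q2) * x (q1, q2))]
  simp only [dsumAmp_rl, dsumAmp_rr, zero_mul, Finset.sum_const_zero, zero_add]
  rfl

lemma normsq_dsum_apply (x : EuclideanSpace ℂ (Fin r × Fin (m + k))) :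
    ‖(Matrix.toEuclideanLin (dsumAmp A B) x : EuclideanSpace ℂ (Fin r × Fin (m + k)))‖ ^ 2
      = ‖(Matrix.toEuclideanLin A (sliceL x) : EuclideanSpace ℂ (Fin r × Fin m))‖ ^ 2
        + ‖(Matrix.toEuclideanLin B (sliceR x) : EuclideanSpace ℂ (Fin r × Fin k))‖ ^ 2 := by
  rw [eucSq, eucSq, eucSq, Fintype.sum_prod_type, Fintype.sum_prod_type, Fintype.sum_prod_type,
    ← Finset.sum_add_distrib]
  refine Finset.sum_congr rfl fun p1 _ => ?_
  rw [sum_finSum (fun p2 => ‖(Matrix.toEuclideanLin (dsumAmp A B) x) (p1, p2)‖ ^ 2)]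
  congr 1
  · exact Finset.sum_congr rfl fun a _ => by rw [dsum_apply_inl]
  · exact Finset.sum_congr rfl fun a _ => by rw [dsum_apply_inr]

def extL (x1 : EuclideanSpace ℂ (Fin r × Fin m)) : EuclideanSpace ℂ (Fin r × Fin (m + k)) :=
  (WithLp.equiv 2 _).symm fun p =>
    Sum.elim (fun a => x1 (p.1, a)) (fun _ => 0) (finSumFinEquiv.symm p.2)

def extR (x2 : EuclideanSpace ℂ (Fin r × Fin k)) : EuclideanSpace ℂ (Fin r × Fin (m + k)) :=
  (WithLp.equiv 2 _).symm fun p =>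
    Sum.elim (fun _ => 0) (fun a => x2 (p.1, a)) (finSumFinEquiv.symm p.2)

lemma sliceL_extL (x1 : EuclideanSpace ℂ (Fin r × Fin m)) : sliceL (extL (k := k) x1) = x1 := by
  ext ⟨q1, a⟩
  simp [sliceL, extL]

lemma sliceR_extL (x1 : EuclideanSpace ℂ (Fin r × Fin m)) : sliceR (extL (k := k) x1) = 0 := by
  ext ⟨q1, a⟩
  simp [sliceR, extL]

lemma sliceL_extR (x2 : EuclideanSpace ℂ (Fin r × Fin k)) : sliceL (extR (m := m) x2) = 0 := by
  ext ⟨q1, a⟩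
  simp [sliceL, extR]

lemma sliceR_extR (x2 : EuclideanSpace ℂ (Fin r × Fin k)) : sliceR (extR (m := m) x2) = x2 := by
  ext ⟨q1, a⟩
  simp [sliceR, extR]

lemma opNorm_dsumAmp : opNorm (dsumAmp A B) = max (opNorm A) (opNorm B) := by
  refine le_antisymm ?_ (max_le ?_ ?_)
  · refine opNorm_le_bound' _ (le_max_of_le_left (opNorm_nonneg' A)) fun x => ?_
    rw [normsq_dsum_apply]
    have hA := le_opNorm' A (sliceL x)
    have hB := le_opNorm' B (sliceR x)
    have hA' : opNorm A * ‖sliceL x‖ ≤ max (opNorm A) (opNorm B) * ‖sliceL x‖ :=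
      mul_le_mul_of_nonneg_right (le_max_left _ _) (norm_nonneg _)
    have hB' : opNorm B * ‖sliceR x‖ ≤ max (opNorm A) (opNorm B) * ‖sliceR x‖ :=
      mul_le_mul_of_nonneg_right (le_max_right _ _) (norm_nonneg _)
    have hx := normsq_slice x
    have h0 : 0 ≤ max (opNorm A) (opNorm B) := le_max_of_le_left (opNorm_nonneg' A)
    have hA2 := pow_le_pow_left₀ (norm_nonneg _) (hA.trans hA') 2
    have hB2 := pow_le_pow_left₀ (norm_nonneg _) (hB.trans hB') 2
    rw [mul_pow] at hA2 hB2 ⊢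
    rw [hx, mul_add]
    linarith
  · refine opNorm_le_bound' _ (opNorm_nonneg' (dsumAmp A B)) fun x1 => ?_
    have h1 := normsq_dsum_apply A B (extL x1)
    rw [sliceL_extL, sliceR_extL] at h1
    have h2 := normsq_slice (extL (k := k) x1)
    rw [sliceL_extL, sliceR_extL] at h2
    have h3 := le_opNorm' (dsumAmp A B) (extL x1)
    simp only [map_zero, norm_zero] at h1 h2
    have h4 := pow_le_pow_left₀ (norm_nonneg _) h3 2
    rw [mul_pow] at h4 ⊢
    rw [h1, h2] at h4
    norm_num at h4
    linarith
  · refine opNorm_le_bound' _ (opNorm_nonneg' (dsumAmp A B)) fun x2 => ?_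
    have h1 := normsq_dsum_apply A B (extR x2)
    rw [sliceL_extR, sliceR_extR] at h1
    have h2 := normsq_slice (extR (m := m) x2)
    rw [sliceL_extR, sliceR_extR] at h2
    have h3 := le_opNorm' (dsumAmp A B) (extR x2)
    simp only [map_zero, norm_zero] at h1 h2
    have h4 := pow_le_pow_left₀ (norm_nonneg _) h3 2
    rw [mul_pow] at h4 ⊢
    rw [h1, h2] at h4
    norm_num at h4
    linarith

lemma dsumAmp_sub (A' : Matrix (Fin r × Fin m) (Fin r × Fin m) ℂ)
    (B' : Matrix (Fin r × Fin k) (Fin r × Fin k) ℂ) :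
    dsumAmp A B - dsumAmp A' B' = dsumAmp (A - A') (B - B') := by
  ext ⟨p1, p2⟩ ⟨q1, q2⟩
  rcases h1 : finSumFinEquiv.symm p2 with a | a <;> rcases h2 : finSumFinEquiv.symm q2 with b | b <;>
    simp [dsumAmp, Matrix.sub_apply, h1, h2]

end DsumAux

section AmpAux
open scoped Matrix.Norms.L2Operator

set_option linter.unusedSectionVars false

def ampK (r : ℕ) {a b : ℕ} (γ : CMat a b) : Matrix (Fin r × Fin a) (Fin r × Fin b) ℂ :=
  Matrix.of fun p q => if p.1 = q.1 then γ p.2 q.2 else 0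

lemma ampK_applyE {r a b : ℕ} (γ : CMat a b) (p : Fin r × Fin a) (q : Fin r × Fin b) :
    ampK r γ p q = if p.1 = q.1 then γ p.2 q.2 else 0 := rfl

lemma ampMul_eq {r m k : ℕ} (α : CMat k m) (M : Matrix (Fin r × Fin m) (Fin r × Fin m) ℂ)
    (β : CMat m k) : ampMul α M β = ampK r α * M * ampK r β := by
  ext ⟨p1, p2⟩ ⟨q1, q2⟩
  have hL : ∀ v : Fin r × Fin m, (ampK r α * M) (p1, p2) v = ∑ u2, α p2 u2 * M (p1, u2) v := by
    intro v
    calc (ampK r α * M) (p1, p2) v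
        = ∑ u1, ∑ u2, (if p1 = u1 then α p2 u2 else 0) * M (u1, u2) v := by
          rw [Matrix.mul_apply, Fintype.sum_prod_type]; rfl
      _ = ∑ u2, ∑ u1, (if p1 = u1 then α p2 u2 else 0) * M (u1, u2) v := Finset.sum_comm
      _ = ∑ u2, α p2 u2 * M (p1, u2) v := by
          simp [ite_mul, zero_mul, Finset.sum_ite_eq]
  show ∑ i, ∑ j, α p2 i * M (p1, i) (q1, j) * β j q2 = _
  rw [Matrix.mul_apply, Fintype.sum_prod_type]
  simp only [ampK_applyE, mul_ite, mul_zero, Finset.sum_ite_eq', Finset.mem_univ, if_true, hL]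
  have hsw : (∑ x : Fin r, ∑ y : Fin m,
        (if x = q1 then (∑ u2, α p2 u2 * M (p1, u2) (x, y)) * β y q2 else 0))
      = ∑ y : Fin m, ∑ x : Fin r,
        (if x = q1 then (∑ u2, α p2 u2 * M (p1, u2) (x, y)) * β y q2 else 0) :=
    Finset.sum_comm
  rw [hsw]
  simp only [Finset.sum_ite_eq', Finset.mem_univ, if_true]
  rw [show (∑ i, ∑ j, α p2 i * M (p1, i) (q1, j) * β j q2)
      = ∑ j, ∑ i, α p2 i * M (p1, i) (q1, j) * β j q2 from Finset.sum_comm]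
  refine Finset.sum_congr rfl fun j _ => ?_
  rw [Finset.sum_mul]

lemma ampK_apply_formula {r a b : ℕ} (γ : CMat a b) (x : EuclideanSpace ℂ (Fin r × Fin b))
    (p1 : Fin r) (p2 : Fin a) :
    (Matrix.toEuclideanLin (ampK r γ) x) (p1, p2)
      = (Matrix.toEuclideanLin γ ((WithLp.equiv 2 _).symm fun q2 => x (p1, q2))) p2 := by
  rw [teApply, teApply, Fintype.sum_prod_type]
  simp [ampK, ite_mul, zero_mul, Finset.sum_ite_eq, Finset.sum_ite_eq']

lemma opNorm_ampK_le {r a b : ℕ} (γ : CMat a b) : opNorm (ampK r γ) ≤ opNorm γ := by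
  refine opNorm_le_bound' _ (opNorm_nonneg' γ) fun x => ?_
  have key : ∀ p1 : Fin r,
      ∑ p2, ‖(Matrix.toEuclideanLin (ampK r γ) x) (p1, p2)‖ ^ 2
        ≤ opNorm γ ^ 2 * ∑ q2, ‖x (p1, q2)‖ ^ 2 := by
    intro p1
    have h1 : ∑ p2, ‖(Matrix.toEuclideanLin (ampK r γ) x) (p1, p2)‖ ^ 2
        = ‖(Matrix.toEuclideanLin γ ((WithLp.equiv 2 _).symm fun q2 => x (p1, q2)) :
            EuclideanSpace ℂ (Fin a))‖ ^ 2 := by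
      rw [eucSq]
      exact Finset.sum_congr rfl fun p2 _ => by rw [ampK_apply_formula]
    have h2 := le_opNorm' γ ((WithLp.equiv 2 _).symm fun q2 => x (p1, q2))
    have h3 := pow_le_pow_left₀ (norm_nonneg _) h2 2
    have h4 : ‖((WithLp.equiv 2 _).symm fun q2 => x (p1, q2) :
        EuclideanSpace ℂ (Fin b))‖ ^ 2 = ∑ q2, ‖x (p1, q2)‖ ^ 2 := by
      rw [eucSq]; rfl
    rw [mul_pow, h4] at h3
    rw [h1]; exact h3
  rw [eucSq, Fintype.sum_prod_type, mul_pow, eucSq x, Fintype.sum_prod_type, Finset.mul_sum]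
  exact Finset.sum_le_sum fun p1 _ => key p1

lemma opNorm_ampMul_le {r m k : ℕ} (α : CMat k m) (M : Matrix (Fin r × Fin m) (Fin r × Fin m) ℂ)
    (β : CMat m k) : opNorm (ampMul α M β) ≤ opNorm α * opNorm M * opNorm β := by
  rw [ampMul_eq]
  calc opNorm (ampK r α * M * ampK r β)
      ≤ opNorm (ampK r α * M) * opNorm (ampK r β) := opNorm_mul_le' _ _
    _ ≤ (opNorm (ampK r α) * opNorm M) * opNorm (ampK r β) :=
        mul_le_mul_of_nonneg_right (opNorm_mul_le' _ _) (opNorm_nonneg' _)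
    _ ≤ opNorm α * opNorm M * opNorm β :=
        mul_le_mul
          (mul_le_mul (opNorm_ampK_le α) le_rfl (opNorm_nonneg' M)
            (opNorm_nonneg' α)) (opNorm_ampK_le β) (opNorm_nonneg' _)
          (mul_nonneg (opNorm_nonneg' _) (opNorm_nonneg' _))

lemma ampMul_sub {r m k : ℕ} (α : CMat k m) (A B : Matrix (Fin r × Fin m) (Fin r × Fin m) ℂ)
    (β : CMat m k) : ampMul α A β - ampMul α B β = ampMul α (A - B) β := by
  ext ⟨p1, p2⟩ ⟨q1, q2⟩
  simp [ampMul, Matrix.sub_apply, mul_sub, sub_mul, Finset.sum_sub_distrib]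

end AmpAux

section LDAux

set_option linter.unusedSectionVars false

variable {V : Type*} [AddCommGroup V] [Module ℂ V] [StarAddMonoid V] [StarModule ℂ V]
variable (S : MOUS V) (Dm : MatMetric S)

lemma le_LD {k r : ℕ} (F : MatAffine S k) {φ ψ : V →ₗ[ℂ] CMat r r}
    (hφ : φ ∈ S.CS r) (hψ : ψ ∈ S.CS r) (hne : φ ≠ ψ) :
    ENNReal.ofReal (opNorm (F.F r φ - F.F r ψ)) / ENNReal.ofReal (Dm.D r φ ψ) ≤ LD S Dm F := by
  refine le_iSup_of_le r ?_
  refine le_iSup_of_le φ ?_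
  refine le_iSup_of_le hφ ?_
  refine le_iSup_of_le ψ ?_
  refine le_iSup_of_le hψ ?_
  exact le_iSup_of_le hne le_rfl

lemma LD_le {k : ℕ} (F : MatAffine S k) {x : ℝ≥0∞}
    (h : ∀ (r : ℕ) (φ ψ : V →ₗ[ℂ] CMat r r), φ ∈ S.CS r → ψ ∈ S.CS r → φ ≠ ψ →
      ENNReal.ofReal (opNorm (F.F r φ - F.F r ψ)) / ENNReal.ofReal (Dm.D r φ ψ) ≤ x) :
    LD S Dm F ≤ x :=
  iSup_le fun r => iSup_le fun φ => iSup_le fun hφ => iSup_le fun ψ => iSup_le fun hψ =>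
    iSup_le fun hne => h r φ ψ hφ hψ hne

lemma D_pos {r : ℕ} {φ ψ : V →ₗ[ℂ] CMat r r} (hφ : φ ∈ S.CS r) (hψ : ψ ∈ S.CS r)
    (hne : φ ≠ ψ) : 0 < Dm.D r φ ψ :=
  lt_of_le_of_ne (Dm.nonneg r φ ψ hφ hψ)
    (fun h => hne ((Dm.eq_zero_iff r φ ψ hφ hψ).mp h.symm))

lemma den_ne_zero {r : ℕ} {φ ψ : V →ₗ[ℂ] CMat r r} (hφ : φ ∈ S.CS r) (hψ : ψ ∈ S.CS r)
    (hne : φ ≠ ψ) : ENNReal.ofReal (Dm.D r φ ψ) ≠ 0 :=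
  ne_of_gt (ENNReal.ofReal_pos.mpr (D_pos S Dm hφ hψ hne))

lemma stateConj_mem {m n : ℕ} (γ : CMat m n) (hγ : γᴴ * γ = 1)
    {φ : V →ₗ[ℂ] CMat m m} (hφ : φ ∈ S.CS m) : stateConj γ φ ∈ S.CS n := by
  constructor
  · show γᴴ * φ S.unit * γ = 1
    rw [hφ.1, Matrix.mul_one, hγ]
  · intro r a ha
    have hps := (hφ.2 r a ha).conjTranspose_mul_mul_same (ampK r γ)
    have hpe : pairing (stateConj γ φ) a = (ampK r γ)ᴴ * pairing φ a * ampK r γ := by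
      have hct : (ampK r γ)ᴴ = ampK r γᴴ := by
        ext ⟨p1, p2⟩ ⟨q1, q2⟩
        simp only [Matrix.conjTranspose_apply, ampK_applyE]
        by_cases h : p1 = q1
        · subst h; simp
        · rw [if_neg h, if_neg (fun hh : q1 = p1 => h hh.symm), star_zero]
      rw [hct, ← ampMul_eq]
      ext ⟨p, u⟩ ⟨q, v⟩
      show (γᴴ * φ (a p q) * γ) u v = ∑ i, ∑ j, γᴴ u i * pairing φ a (p, i) (q, j) * γ j v
      calc (γᴴ * φ (a p q) * γ) u v
          = ∑ j, (∑ i, γᴴ u i * φ (a p q) i j) * γ j v := by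
            rw [Matrix.mul_apply]
            exact Finset.sum_congr rfl fun j _ => by rw [Matrix.mul_apply]
        _ = ∑ j, ∑ i, γᴴ u i * φ (a p q) i j * γ j v := by
            refine Finset.sum_congr rfl fun j _ => ?_
            rw [Finset.sum_mul]
        _ = ∑ i, ∑ j, γᴴ u i * φ (a p q) i j * γ j v := Finset.sum_comm
        _ = ∑ i, ∑ j, γᴴ u i * pairing φ a (p, i) (q, j) * γ j v := rfl
    rw [hpe]
    exact hps

def eCol {r : ℕ} (i : Fin r) : CMat r 1 :=
  Matrix.of fun l _ => if l = i then 1 else 0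

lemma eCol_unit {r : ℕ} (i : Fin r) : (eCol i)ᴴ * eCol i = 1 := by
  ext p q
  rw [Subsingleton.elim p q]
  rw [Matrix.mul_apply]
  simp [eCol, Matrix.conjTranspose_apply, apply_ite (star : ℂ → ℂ), ite_mul, zero_mul,
    Finset.sum_ite_eq', Matrix.one_apply]

lemma ampConj_eCol {r k : ℕ} (M : Matrix (Fin r × Fin k) (Fin r × Fin k) ℂ)
    (i : Fin r) (a b : Fin k) :
    ampConj (eCol i) M (0, a) (0, b) = M (i, a) (i, b) := by
  show (∑ l, ∑ l', star (eCol i l 0) * M (l, a) (l', b) * eCol i l' 0) = _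
  simp [eCol, apply_ite (star : ℂ → ℂ), ite_mul, mul_ite, zero_mul, mul_zero,
    Finset.sum_ite_eq', Finset.sum_ite_eq]

def pvec {r : ℕ} (i j : Fin r) (u v : ℂ) : CMat r 1 :=
  Matrix.of fun l _ => if l = i then u else if l = j then v else 0

lemma sum_pair {r : ℕ} {i j : Fin r} (hij : i ≠ j) (h : Fin r → ℂ) (u v : ℂ) :
    ∑ l, h l * (if l = i then u else if l = j then v else 0) = h i * u + h j * v := by
  have key : ∀ l : Fin r, h l * (if l = i then u else if l = j then v else 0)
      = (if l = i then h i * u else 0) + (if l = j then h j * v else 0) := by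
    intro l
    by_cases h1 : l = i
    · by_cases h2 : l = j
      · exact absurd (h1.symm.trans h2) hij
      · subst h1; simp [h2]
    · by_cases h2 : l = j
      · subst h2; simp [h1]
      · simp [h1, h2]
  rw [Finset.sum_congr rfl fun l _ => key l, Finset.sum_add_distrib]
  simp [Finset.sum_ite_eq']

lemma star_pvec {r : ℕ} {i j : Fin r} (hij : i ≠ j) (u v : ℂ) (l : Fin r) (w : Fin 1) :
    star (pvec i j u v l w) = (if l = i then star u else if l = j then star v else 0) := by
  by_cases h1 : l = i
  · simp [pvec, h1]
  · by_cases h3 : l = j <;> simp [pvec, h1, h3, (Ne.symm hij : j ≠ i)]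

lemma pvec_unit {r : ℕ} {i j : Fin r} (hij : i ≠ j) {u v : ℂ}
    (huv : star u * u + star v * v = 1) : (pvec i j u v)ᴴ * pvec i j u v = 1 := by
  ext p q
  rw [Subsingleton.elim p q]
  rw [Matrix.mul_apply]
  have key : ∀ l : Fin r, (pvec i j u v)ᴴ q l * pvec i j u v l q
      = (if l = i then star u * u else 0) + (if l = j then star v * v else 0) := by
    intro l
    rw [Matrix.conjTranspose_apply, star_pvec hij]
    show (if l = i then star u else if l = j then star v else 0) *
        (if l = i then u else if l = j then v else 0) = _
    by_cases h1 : l = i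
    · by_cases h2 : l = j
      · exact absurd (h1.symm.trans h2) hij
      · simp [h1, h2, hij]
    · by_cases h2 : l = j <;> simp [h1, h2, (Ne.symm hij : j ≠ i)]
  rw [Finset.sum_congr rfl fun l _ => key l, Finset.sum_add_distrib]
  simp only [Finset.sum_ite_eq', Finset.mem_univ, if_true]
  rw [Matrix.one_apply_eq]
  simpa [Complex.star_def] using huv

lemma ampConj_pvec {r k : ℕ} (M : Matrix (Fin r × Fin k) (Fin r × Fin k) ℂ) {i j : Fin r}
    (hij : i ≠ j) (u v : ℂ) (a b : Fin k) :
    ampConj (pvec i j u v) M (0, a) (0, b)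
      = star u * M (i, a) (i, b) * u + star u * M (i, a) (j, b) * v
        + star v * M (j, a) (i, b) * u + star v * M (j, a) (j, b) * v := by
  show (∑ l, ∑ l', star (pvec i j u v l 0) * M (l, a) (l', b) * pvec i j u v l' 0) = _
  have inner : ∀ l : Fin r,
      (∑ l', star (pvec i j u v l 0) * M (l, a) (l', b) * pvec i j u v l' 0)
        = star (pvec i j u v l 0) * M (l, a) (i, b) * u
          + star (pvec i j u v l 0) * M (l, a) (j, b) * v := by
    intro l
    have := sum_pair hij (fun l' => star (pvec i j u v l 0) * M (l, a) (l', b)) u v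
    rw [← this]
    rfl
  rw [Finset.sum_congr rfl fun l _ => inner l, Finset.sum_add_distrib]
  have s1 : (∑ l, star (pvec i j u v l 0) * M (l, a) (i, b) * u)
      = star u * M (i, a) (i, b) * u + star v * M (j, a) (i, b) * u := by
    have key : ∀ l : Fin r, star (pvec i j u v l 0) * M (l, a) (i, b) * u
        = (M (l, a) (i, b) * u) * (if l = i then star u else if l = j then star v else 0) := by
      intro l; rw [star_pvec hij]; ring
    rw [Finset.sum_congr rfl fun l _ => key l, sum_pair hij]
    ring
  have s2 : (∑ l, star (pvec i j u v l 0) * M (l, a) (j, b) * v)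
      = star u * M (i, a) (j, b) * v + star v * M (j, a) (j, b) * v := by
    have key : ∀ l : Fin r, star (pvec i j u v l 0) * M (l, a) (j, b) * v
        = (M (l, a) (j, b) * v) * (if l = i then star u else if l = j then star v else 0) := by
      intro l; rw [star_pvec hij]; ring
    rw [Finset.sum_congr rfl fun l _ => key l, sum_pair hij]
    ring
  rw [s1, s2]
  ring

lemma scalar_of_compressions {r k : ℕ} (M : Matrix (Fin r × Fin k) (Fin r × Fin k) ℂ)
    (C : Matrix (Fin 1 × Fin k) (Fin 1 × Fin k) ℂ)
    (h : ∀ ξ : CMat r 1, ξᴴ * ξ = 1 → ampConj ξ M = C) :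
    M = scalarAmp r (Matrix.of fun a b => C (0, a) (0, b)) := by
  have hdiag : ∀ (i : Fin r) (a b : Fin k), M (i, a) (i, b) = C (0, a) (0, b) := by
    intro i a b
    rw [← ampConj_eCol M i a b, h (eCol i) (eCol_unit i)]
  ext ⟨i, a⟩ ⟨j, b⟩
  by_cases hij : i = j
  · subst hij
    simp [scalarAmp, hdiag i a b]
  · simp only [scalarAmp, Matrix.of_apply, hij, if_false]
    set s : ℂ := (((Real.sqrt 2)⁻¹ : ℝ) : ℂ) with hs_def
    have hss : s * s = 1 / 2 := by
      rw [hs_def, ← Complex.ofReal_mul, ← mul_inv, Real.mul_self_sqrt (by norm_num : (0:ℝ) ≤ 2)]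
      norm_num
    have hstar : (starRingEnd ℂ) s = s := by rw [hs_def]; exact Complex.conj_ofReal _
    have hun1 : (pvec i j s s)ᴴ * pvec i j s s = 1 :=
      pvec_unit hij (by
        simp only [Complex.star_def, hstar]
        linear_combination 2 * hss)
    have hun2 : (pvec i j s (s * Complex.I))ᴴ * pvec i j s (s * Complex.I) = 1 :=
      pvec_unit hij (by
        simp only [Complex.star_def, _root_.map_mul, hstar, Complex.conj_I]
        linear_combination (-(s * s)) * Complex.I_mul_I + 2 * hss)
    have h1 := Matrix.ext_iff.mpr (h (pvec i j s s) hun1) (0, a) (0, b)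
    rw [ampConj_pvec M hij s s a b] at h1
    have h2 := Matrix.ext_iff.mpr (h (pvec i j s (s * Complex.I)) hun2) (0, a) (0, b)
    rw [ampConj_pvec M hij s (s * Complex.I) a b] at h2
    rw [hdiag i a b, hdiag j a b] at h1 h2
    simp only [Complex.star_def, _root_.map_mul, hstar, Complex.conj_I] at h1 h2
    have e1 : M (i, a) (j, b) + M (j, a) (i, b) = 0 := by
      linear_combination 2 * h1
        - (4 * C (0, a) (0, b) + 2 * M (i, a) (j, b) + 2 * M (j, a) (i, b)) * hss
    have e2' : Complex.I * (M (i, a) (j, b) - M (j, a) (i, b)) = 0 := by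
      linear_combination 2 * h2
        - (2 * C (0, a) (0, b) + 2 * Complex.I * M (i, a) (j, b)
            - 2 * Complex.I * M (j, a) (i, b)
            - 2 * (Complex.I * Complex.I) * C (0, a) (0, b)) * hss
        + C (0, a) (0, b) * Complex.I_mul_I
    have e2 : M (i, a) (j, b) - M (j, a) (i, b) = 0 :=
      (mul_eq_zero.mp e2').resolve_left Complex.I_ne_zero
    linear_combination (1 / 2 : ℂ) * e1 + (1 / 2 : ℂ) * e2

end LDAux
/-- if the matrix metric `D` on `CS(V)` is convex, midpoint balanced and midpoint
concave, the `D`-topology agrees with the BW-topology, and `L^c_{Dₙ}(φ - ψ) = Dₙ(φ, ψ)` for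
all matrix states, then `L_D = (L_{Dₙ})` is a lower semicontinuous matrix Lip-norm on the
matrix order unit space `(K₁, I)`. -/
theorem LD_lipNorm_of_Lc_eq (S : MOUS V) (Dm : MatMetric S)
    (h1 : MMConvex S Dm) (h2 : MMBalanced S Dm) (h3 : MMConcave S Dm)
    (htop : ∀ n, dTop (S.CS n) (Dm.D n) = bwTop S n)
    (hc : ∀ n (φ ψ : V →ₗ[ℂ] CMat n n), φ ∈ S.CS n → ψ ∈ S.CS n →
      DD S Dm n φ ψ = ENNReal.ofReal (Dm.D n φ ψ)) :
    IsLipNormOnK S Dm := by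
  refine ⟨?_, ?_, ?_, ?_, ?_, ?_, ?_, ?_⟩
  -- subadditivity
  · intro k F G H hH
    refine LD_le S Dm H fun r φ ψ hφ hψ hne => ?_
    have hd : H.F r φ - H.F r ψ = (F.F r φ - F.F r ψ) + (G.F r φ - G.F r ψ) := by
      rw [hH r φ hφ, hH r ψ hψ]; abel
    calc ENNReal.ofReal (opNorm (H.F r φ - H.F r ψ)) / ENNReal.ofReal (Dm.D r φ ψ)
        ≤ (ENNReal.ofReal (opNorm (F.F r φ - F.F r ψ))
            + ENNReal.ofReal (opNorm (G.F r φ - G.F r ψ))) / ENNReal.ofReal (Dm.D r φ ψ) := by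
          refine ENNReal.div_le_div_right ?_ _
          rw [← ENNReal.ofReal_add (opNorm_nonneg' _) (opNorm_nonneg' _)]
          refine ENNReal.ofReal_le_ofReal ?_
          rw [hd]; exact opNorm_add_le' _ _
      _ = ENNReal.ofReal (opNorm (F.F r φ - F.F r ψ)) / ENNReal.ofReal (Dm.D r φ ψ)
            + ENNReal.ofReal (opNorm (G.F r φ - G.F r ψ)) / ENNReal.ofReal (Dm.D r φ ψ) :=
          ENNReal.add_div
      _ ≤ LD S Dm F + LD S Dm G :=
          add_le_add (le_LD S Dm F hφ hψ hne) (le_LD S Dm G hφ hψ hne)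
  -- homogeneity
  · intro k c F H hH
    have hterm : ∀ (r : ℕ) (φ ψ : V →ₗ[ℂ] CMat r r), φ ∈ S.CS r → ψ ∈ S.CS r →
        ENNReal.ofReal (opNorm (H.F r φ - H.F r ψ))
          = (‖c‖₊ : ℝ≥0∞) * ENNReal.ofReal (opNorm (F.F r φ - F.F r ψ)) := by
      intro r φ ψ hφ hψ
      rw [hH r φ hφ, hH r ψ hψ, ← smul_sub, opNorm_smul',
        ENNReal.ofReal_mul (norm_nonneg c), ← coe_nnnorm, ENNReal.ofReal_coe_nnreal]
    refine le_antisymm ?_ ?_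
    · refine LD_le S Dm H fun r φ ψ hφ hψ hne => ?_
      rw [hterm r φ ψ hφ hψ, div_eq_mul_inv, mul_assoc, ← div_eq_mul_inv]
      exact mul_le_mul_right (le_LD S Dm F hφ hψ hne) _
    · have hsup : (‖c‖₊ : ℝ≥0∞) * LD S Dm F
          = ⨆ (r : ℕ) (φ : V →ₗ[ℂ] CMat r r) (_ : φ ∈ S.CS r) (ψ : V →ₗ[ℂ] CMat r r)
              (_ : ψ ∈ S.CS r) (_ : φ ≠ ψ),
              (‖c‖₊ : ℝ≥0∞) * (ENNReal.ofReal (opNorm (F.F r φ - F.F r ψ))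
                / ENNReal.ofReal (Dm.D r φ ψ)) := by
        unfold LD
        simp only [ENNReal.mul_iSup]
      rw [hsup]
      refine iSup_le fun r => iSup_le fun φ => iSup_le fun hφ => iSup_le fun ψ =>
        iSup_le fun hψ => iSup_le fun hne => ?_
      rw [div_eq_mul_inv, ← mul_assoc, ← hterm r φ ψ hφ hψ, ← div_eq_mul_inv]
      exact le_LD S Dm H hφ hψ hne
  -- null space
  · intro k F
    constructor
    · intro hLD
      have hconst : ∀ (r : ℕ) (φ ψ : V →ₗ[ℂ] CMat r r), φ ∈ S.CS r → ψ ∈ S.CS r →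
          F.F r φ = F.F r ψ := by
        intro r φ ψ hφ hψ
        by_cases hne : φ = ψ
        · rw [hne]
        · have h0 : ENNReal.ofReal (opNorm (F.F r φ - F.F r ψ))
              / ENNReal.ofReal (Dm.D r φ ψ) = 0 :=
            le_antisymm (hLD ▸ le_LD S Dm F hφ hψ hne) zero_le
          have h1 := (ENNReal.div_eq_zero_iff.mp h0).resolve_right ENNReal.ofReal_ne_top
          have h2 : opNorm (F.F r φ - F.F r ψ) = 0 :=
            le_antisymm (ENNReal.ofReal_eq_zero.mp h1) (opNorm_nonneg' _)
          exact sub_eq_zero.mp (opNorm_eq_zero' h2)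
      by_cases hcs : ∃ ψ₀ : V →ₗ[ℂ] CMat 1 1, ψ₀ ∈ S.CS 1
      · obtain ⟨ψ₀, hψ₀⟩ := hcs
        refine ⟨Matrix.of fun a b => F.F 1 ψ₀ (0, a) (0, b), ?_⟩
        intro r φ hφ
        refine scalar_of_compressions (F.F r φ) (F.F 1 ψ₀) ?_
        intro ξ hξ
        have haff := F.affine 1 1 (fun _ => r) (fun _ => φ) (fun _ => ξ) (fun _ => hφ)
          (by simpa using hξ)
        simp only [Fin.sum_univ_one] at haff
        rw [← haff]
        exact hconst 1 _ _ (stateConj_mem S ξ hξ hφ) hψ₀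
      · refine ⟨0, ?_⟩
        intro r
        cases r with
        | zero =>
          intro φ hφ
          ext ⟨i, a⟩ ⟨j, b⟩
          exact i.elim0
        | succ r' =>
          intro φ hφ
          exact absurd ⟨_, stateConj_mem S (eCol (0 : Fin (r' + 1))) (eCol_unit _) hφ⟩ hcs
    · rintro ⟨c, hcs⟩
      refine le_antisymm (LD_le S Dm F fun r φ ψ hφ hψ hne => ?_) zero_le
      rw [hcs r φ hφ, hcs r ψ hψ, sub_self, opNorm_zero', ENNReal.ofReal_zero, ENNReal.zero_div]
  -- direct sums
  · intro m k F G H hH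
    refine le_antisymm (LD_le S Dm H fun r φ ψ hφ hψ hne => ?_) (max_le ?_ ?_)
    · have hd : H.F r φ - H.F r ψ = dsumAmp (F.F r φ - F.F r ψ) (G.F r φ - G.F r ψ) := by
        rw [hH r φ hφ, hH r ψ hψ, dsumAmp_sub]
      rw [hd, opNorm_dsumAmp]
      have hmax1 : ENNReal.ofReal (max (opNorm (F.F r φ - F.F r ψ)) (opNorm (G.F r φ - G.F r ψ)))
          = max (ENNReal.ofReal (opNorm (F.F r φ - F.F r ψ)))
              (ENNReal.ofReal (opNorm (G.F r φ - G.F r ψ))) :=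
        Monotone.map_max fun _ _ h => ENNReal.ofReal_le_ofReal h
      have hmax2 : max (ENNReal.ofReal (opNorm (F.F r φ - F.F r ψ)))
            (ENNReal.ofReal (opNorm (G.F r φ - G.F r ψ))) / ENNReal.ofReal (Dm.D r φ ψ)
          = max (ENNReal.ofReal (opNorm (F.F r φ - F.F r ψ)) / ENNReal.ofReal (Dm.D r φ ψ))
              (ENNReal.ofReal (opNorm (G.F r φ - G.F r ψ)) / ENNReal.ofReal (Dm.D r φ ψ)) :=
        Monotone.map_max fun _ _ h => ENNReal.div_le_div_right h _
      rw [hmax1, hmax2]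
      exact max_le_max (le_LD S Dm F hφ hψ hne) (le_LD S Dm G hφ hψ hne)
    · refine LD_le S Dm F fun r φ ψ hφ hψ hne => ?_
      have hd : opNorm (F.F r φ - F.F r ψ) ≤ opNorm (H.F r φ - H.F r ψ) := by
        rw [hH r φ hφ, hH r ψ hψ, dsumAmp_sub, opNorm_dsumAmp]
        exact le_max_left _ _
      exact le_trans (ENNReal.div_le_div_right (ENNReal.ofReal_le_ofReal hd) _)
        (le_LD S Dm H hφ hψ hne)
    · refine LD_le S Dm G fun r φ ψ hφ hψ hne => ?_
      have hd : opNorm (G.F r φ - G.F r ψ) ≤ opNorm (H.F r φ - H.F r ψ) := by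
        rw [hH r φ hφ, hH r ψ hψ, dsumAmp_sub, opNorm_dsumAmp]
        exact le_max_right _ _
      exact le_trans (ENNReal.div_le_div_right (ENNReal.ofReal_le_ofReal hd) _)
        (le_LD S Dm H hφ hψ hne)
  -- products with scalar matrices
  · intro m k α β F H hH
    refine LD_le S Dm H fun r φ ψ hφ hψ hne => ?_
    have hnorm : opNorm (H.F r φ - H.F r ψ)
        ≤ opNorm α * opNorm (F.F r φ - F.F r ψ) * opNorm β := by
      rw [hH r φ hφ, hH r ψ hψ, ampMul_sub]
      exact opNorm_ampMul_le α _ β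
    calc ENNReal.ofReal (opNorm (H.F r φ - H.F r ψ)) / ENNReal.ofReal (Dm.D r φ ψ)
        ≤ ENNReal.ofReal (opNorm α * opNorm (F.F r φ - F.F r ψ) * opNorm β)
            / ENNReal.ofReal (Dm.D r φ ψ) :=
          ENNReal.div_le_div_right (ENNReal.ofReal_le_ofReal hnorm) _
      _ = ENNReal.ofReal (opNorm α) * (ENNReal.ofReal (opNorm (F.F r φ - F.F r ψ))
            / ENNReal.ofReal (Dm.D r φ ψ)) * ENNReal.ofReal (opNorm β) := by
          rw [ENNReal.ofReal_mul (mul_nonneg (opNorm_nonneg' _) (opNorm_nonneg' _)),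
            ENNReal.ofReal_mul (opNorm_nonneg' α), div_eq_mul_inv, div_eq_mul_inv]
          ring
      _ ≤ ENNReal.ofReal (opNorm α) * LD S Dm F * ENNReal.ofReal (opNorm β) :=
          mul_le_mul' (mul_le_mul' le_rfl (le_LD S Dm F hφ hψ hne)) le_rfl
  -- the involution
  · intro k F H hH
    have key : ∀ (F' H' : MatAffine S k),
        (∀ (r : ℕ) (φ : V →ₗ[ℂ] CMat r r), φ ∈ S.CS r → H'.F r φ = (F'.F r φ)ᴴ) →
        LD S Dm H' ≤ LD S Dm F' := by
      intro F' H' hH'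
      refine LD_le S Dm H' fun r φ ψ hφ hψ hne => ?_
      have heq : opNorm (H'.F r φ - H'.F r ψ) = opNorm (F'.F r φ - F'.F r ψ) := by
        rw [hH' r φ hφ, hH' r ψ hψ, ← Matrix.conjTranspose_sub, opNorm_conjT]
      rw [heq]
      exact le_LD S Dm F' hφ hψ hne
    refine le_antisymm (key F H hH) (key H F ?_)
    intro r φ hφ
    rw [hH r φ hφ, Matrix.conjTranspose_conjTranspose]
  -- lower semicontinuity
  · intro k t ht F hap
    refine LD_le S Dm F fun r φ ψ hφ hψ hne => ?_
    have hd0 : ENNReal.ofReal (Dm.D r φ ψ) ≠ 0 := den_ne_zero S Dm hφ hψ hne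
    have hdt : ENNReal.ofReal (Dm.D r φ ψ) ≠ ⊤ := ENNReal.ofReal_ne_top
    rw [ENNReal.div_le_iff hd0 hdt]
    refine ENNReal.le_of_forall_pos_le_add fun ε hε _ => ?_
    have hε' : (0 : ℝ) < (ε : ℝ) / 2 := half_pos (by exact_mod_cast hε)
    obtain ⟨G, hG1, hG2⟩ := hap ((ε : ℝ) / 2) hε'
    have hGle : ENNReal.ofReal (opNorm (G.F r φ - G.F r ψ))
        ≤ ENNReal.ofReal t * ENNReal.ofReal (Dm.D r φ ψ) := by
      rw [← ENNReal.div_le_iff hd0 hdt]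
      exact le_trans (le_LD S Dm G hφ hψ hne) hG1
    have hnorm : opNorm (F.F r φ - F.F r ψ) ≤ opNorm (G.F r φ - G.F r ψ) + (ε : ℝ) := by
      have e1 : F.F r φ - F.F r ψ
          = (F.F r φ - G.F r φ) + (G.F r φ - G.F r ψ) + (G.F r ψ - F.F r ψ) := by abel
      have t2 := opNorm_add_le' (F.F r φ - G.F r φ) (G.F r φ - G.F r ψ)
      have t1 := opNorm_add_le' (F.F r φ - G.F r φ + (G.F r φ - G.F r ψ)) (G.F r ψ - F.F r ψ)
      have b1 := hG2 r φ hφ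
      have b2 : opNorm (G.F r ψ - F.F r ψ) ≤ (ε : ℝ) / 2 := by
        rw [show G.F r ψ - F.F r ψ = -(F.F r ψ - G.F r ψ) from (neg_sub _ _).symm, opNorm_neg']
        exact hG2 r ψ hψ
      rw [e1]
      linarith
    calc ENNReal.ofReal (opNorm (F.F r φ - F.F r ψ))
        ≤ ENNReal.ofReal (opNorm (G.F r φ - G.F r ψ) + (ε : ℝ)) :=
          ENNReal.ofReal_le_ofReal hnorm
      _ = ENNReal.ofReal (opNorm (G.F r φ - G.F r ψ)) + ENNReal.ofReal (ε : ℝ) :=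
          ENNReal.ofReal_add (opNorm_nonneg' _) ε.coe_nonneg
      _ ≤ ENNReal.ofReal t * ENNReal.ofReal (Dm.D r φ ψ) + ↑ε := by
          rw [ENNReal.ofReal_coe_nnreal]
          exact add_le_add hGle le_rfl
  -- topologies agree
  · intro n
    rw [← htop n]
    unfold dTopE dTop
    refine le_antisymm ?_ ?_
    · rw [TopologicalSpace.le_generateFrom_iff_subset_isOpen]
      rintro U ⟨x, ε, hε, rfl⟩
      have hset : {y : ↥(S.CS n) | Dm.D n (x : V →ₗ[ℂ] CMat n n) (y : V →ₗ[ℂ] CMat n n) < ε}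
          = {y : ↥(S.CS n) | DD S Dm n (x : V →ₗ[ℂ] CMat n n) (y : V →ₗ[ℂ] CMat n n)
              < ENNReal.ofReal ε} := by
        ext y
        simp only [Set.mem_setOf_eq]
        rw [hc n x y x.2 y.2]
        exact (ENNReal.ofReal_lt_ofReal_iff hε).symm
      show TopologicalSpace.GenerateOpen _ _
      rw [hset]
      exact TopologicalSpace.GenerateOpen.basic _ ⟨x, ENNReal.ofReal ε, ENNReal.ofReal_pos.mpr hε, rfl⟩
    · rw [TopologicalSpace.le_generateFrom_iff_subset_isOpen]
      rintro U ⟨x, ε, hε, rfl⟩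
      show TopologicalSpace.GenerateOpen _ _
      by_cases hεt : ε = ⊤
      · subst hεt
        have hset : {y : ↥(S.CS n) | DD S Dm n (x : V →ₗ[ℂ] CMat n n) (y : V →ₗ[ℂ] CMat n n) < ⊤}
            = Set.univ := by
          ext y
          simp only [Set.mem_setOf_eq, Set.mem_univ, iff_true]
          rw [hc n x y x.2 y.2]
          exact ENNReal.ofReal_lt_top
        rw [hset]
        exact TopologicalSpace.GenerateOpen.univ
      · have hset : {y : ↥(S.CS n) | DD S Dm n (x : V →ₗ[ℂ] CMat n n) (y : V →ₗ[ℂ] CMat n n) < ε}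
            = {y : ↥(S.CS n) | Dm.D n (x : V →ₗ[ℂ] CMat n n) (y : V →ₗ[ℂ] CMat n n) < ε.toReal} := by
          ext y
          simp only [Set.mem_setOf_eq]
          rw [hc n x y x.2 y.2]
          exact ENNReal.ofReal_lt_iff_lt_toReal (Dm.nonneg n x y x.2 y.2) hεt
        rw [hset]
        exact TopologicalSpace.GenerateOpen.basic _
          ⟨x, ε.toReal, ENNReal.toReal_pos (ne_of_gt hε) hεt, rfl⟩
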